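/- arXiv:1403.5364 — 4 statements merged into one kernel-verified Lean document; each statement's English description precedes it below -/
import Mathlib

section
/- Let W(x,t) > 0 and Y(x,u,t) satisfy −Ẇ + AW + WA' + BY + Y'B' < 0 for all x,u,t. Then M := W⁻¹ and K := YW⁻¹ satisfy the control contraction condition Ṁ + (A+BK)'M + M(A+BK) < 0. -/
open Matrix

lemma posdef_conj {n : ℕ} (N C : Matrix (Fin n) (Fin n) ℝ) (hN : N.PosDef)
    (hC : IsUnit C.det) : (Cᵀ * N * C).PosDef := by
  rw [Matrix.posDef_iff_dotProduct_mulVec]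
  constructor
  · have := Matrix.isHermitian_conjTranspose_mul_mul C hN.1
    simpa [Matrix.conjTranspose_eq_transpose_of_trivial] using this
  · intro x hx
    have hx' : C *ᵥ x ≠ 0 := fun hcx => hx (by
      have := congrArg (fun v => C⁻¹ *ᵥ v) hcx
      simpa [Matrix.mulVec_mulVec, Matrix.nonsing_inv_mul C hC] using this)
    have := hN.dotProduct_mulVec_pos hx'
    simpa [Matrix.dotProduct_mulVec, Matrix.vecMul_mulVec, Matrix.mulVec_mulVec,
      Matrix.mul_assoc] using this

/-- if `W > 0` and `Y` satisfy `−Ẇ + AW + WA' + BY + Y'B' < 0`, then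
`M := W⁻¹`, `K := YW⁻¹` satisfy the control contraction condition
`Ṁ + (A+BK)'M + M(A+BK) < 0`, where `Ṁ = −W⁻¹ Ẇ W⁻¹`. -/
theorem ccm_W_to_M (n m : ℕ)
    (A : Matrix (Fin n) (Fin n) ℝ) (B : Matrix (Fin n) (Fin m) ℝ)
    (W Wd : Matrix (Fin n) (Fin n) ℝ) (Y : Matrix (Fin m) (Fin n) ℝ)
    (hW : W.PosDef) (hWd : Wd.IsSymm)
    (h : (-(-Wd + A * W + W * Aᵀ + B * Y + Yᵀ * Bᵀ)).PosDef) :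
    (-((-(W⁻¹ * Wd * W⁻¹)) + (A + B * (Y * W⁻¹))ᵀ * W⁻¹ + W⁻¹ * (A + B * (Y * W⁻¹)))).PosDef := by
  have hdet : IsUnit W.det := isUnit_iff_ne_zero.mpr (ne_of_gt hW.det_pos)
  have hdet' : IsUnit W⁻¹.det := Matrix.isUnit_nonsing_inv_det W hdet
  have hWs : Wᵀ = W := hW.1
  have hWinv : W⁻¹ᵀ = W⁻¹ := by rw [Matrix.transpose_nonsing_inv, hWs]
  have key := posdef_conj _ W⁻¹ h hdet'
  have hWW : W * W⁻¹ = 1 := Matrix.mul_nonsing_inv W hdet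
  have hWW' : W⁻¹ * W = 1 := Matrix.nonsing_inv_mul W hdet
  have heq : W⁻¹ᵀ * -(-Wd + A * W + W * Aᵀ + B * Y + Yᵀ * Bᵀ) * W⁻¹ =
      -((-(W⁻¹ * Wd * W⁻¹)) + (A + B * (Y * W⁻¹))ᵀ * W⁻¹ + W⁻¹ * (A + B * (Y * W⁻¹))) := by
    rw [hWinv]
    simp only [Matrix.transpose_add, Matrix.transpose_mul, hWinv]
    rw [Matrix.mul_neg, Matrix.neg_mul]
    congr 1
    simp only [Matrix.mul_add, Matrix.add_mul, Matrix.mul_assoc, hWW, hWW', Matrix.mul_one]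
    rw [← Matrix.mul_assoc W⁻¹ W, hWW', Matrix.one_mul]
    simp only [neg_smul, one_smul, Matrix.mul_neg, Matrix.neg_mul, Matrix.mul_assoc, smul_mul_assoc, mul_smul_comm]
    abel
  rw [heq] at key
  exact key
end

section
/- (Finsler-type converse) Let S be a symmetric n×n matrix and B an n×m matrix such that δ'Sδ < 0 for all nonzero δ with B'δ = 0. Then there exists ρ ∈ ℝ such that S − ρBB' < 0 (negative definite). -/
open Matrix

/-- Finsler-type converse: if `S` is symmetric and `δ'Sδ < 0` for all nonzero `δ`
with `B'δ = 0`, then there exists `ρ ∈ ℝ` with `S − ρBB' < 0` (negative definite). -/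
theorem finsler_converse (n m : ℕ)
    (S : Matrix (Fin n) (Fin n) ℝ) (B : Matrix (Fin n) (Fin m) ℝ)
    (hS : S.IsSymm)
    (h : ∀ δ : Fin n → ℝ, δ ≠ 0 → Bᵀ *ᵥ δ = 0 → δ ⬝ᵥ S *ᵥ δ < 0) :
    ∃ ρ : ℝ, (-(S - ρ • (B * Bᵀ))).PosDef := by
  classical
  set f : (Fin n → ℝ) → ℝ := fun δ => δ ⬝ᵥ S *ᵥ δ with hf_def
  set g : (Fin n → ℝ) → ℝ := fun δ => (Bᵀ *ᵥ δ) ⬝ᵥ (Bᵀ *ᵥ δ) with hg_def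
  have hg_nonneg : ∀ δ, 0 ≤ g δ := fun δ =>
    Finset.sum_nonneg fun i _ => mul_self_nonneg _
  -- quadratic form identity
  have hquad : ∀ (ρ : ℝ) (x : Fin n → ℝ),
      x ⬝ᵥ (-(S - ρ • (B * Bᵀ))) *ᵥ x = ρ * g x - f x := by
    intro ρ x
    have hBB : x ⬝ᵥ (B * Bᵀ) *ᵥ x = g x := by
      rw [← mulVec_mulVec, dotProduct_mulVec, ← mulVec_transpose]
    simp only [neg_mulVec, sub_mulVec, smul_mulVec, dotProduct_neg,
      dotProduct_sub, dotProduct_smul, smul_eq_mul, hBB, hf_def]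
    ring
  -- Hermitian part
  have hHerm : ∀ ρ : ℝ, (-(S - ρ • (B * Bᵀ))).IsHermitian := by
    intro ρ
    have : (-(S - ρ • (B * Bᵀ)))ᵀ = -(S - ρ • (B * Bᵀ)) := by
      rw [transpose_neg, transpose_sub, transpose_smul, transpose_mul,
        transpose_transpose, hS.eq]
    rw [Matrix.IsHermitian, conjTranspose_eq_transpose_of_trivial]
    exact this
  -- scaling
  have hf_smul : ∀ (c : ℝ) (x : Fin n → ℝ), f (c • x) = c ^ 2 * f x := by
    intro c x
    simp only [hf_def, mulVec_smul, smul_dotProduct, dotProduct_smul, smul_eq_mul]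
    ring
  have hg_smul : ∀ (c : ℝ) (x : Fin n → ℝ), g (c • x) = c ^ 2 * g x := by
    intro c x
    simp only [hg_def, mulVec_smul, smul_dotProduct, dotProduct_smul, smul_eq_mul]
    ring
  by_contra hcon
  push_neg at hcon
  -- continuity
  have hmvS : ∀ i, Continuous fun δ : Fin n → ℝ => (S *ᵥ δ) i := by
    intro i
    simp only [mulVec, dotProduct]
    exact continuous_finset_sum _ fun j _ => continuous_const.mul (continuous_apply j)
  have hmvB : ∀ i, Continuous fun δ : Fin n → ℝ => (Bᵀ *ᵥ δ) i := by
    intro i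
    simp only [mulVec, dotProduct]
    exact continuous_finset_sum _ fun j _ => continuous_const.mul (continuous_apply j)
  have hf_cont : Continuous f := by
    apply continuous_finset_sum
    intro i _
    exact (continuous_apply i).mul (hmvS i)
  have hg_cont : Continuous g := by
    exact continuous_finset_sum _ fun i _ => (hmvB i).mul (hmvB i)
  -- nested compact sets
  set t : ℕ → Set (Fin n → ℝ) :=
    fun k => {δ | δ ∈ Metric.sphere (0 : Fin n → ℝ) 1 ∧ (k : ℝ) * g δ ≤ f δ} with ht_def
  have ht_closed : ∀ k, IsClosed (t k) := by
    intro k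
    exact (Metric.isClosed_sphere).inter (isClosed_le (continuous_const.mul hg_cont) hf_cont)
  have ht_sub : ∀ k, t k ⊆ Metric.sphere (0 : Fin n → ℝ) 1 := fun k δ hδ => hδ.1
  have ht_compact : ∀ k, IsCompact (t k) := fun k =>
    (isCompact_sphere (0 : Fin n → ℝ) 1).of_isClosed_subset (ht_closed k) (ht_sub k)
  have ht_anti : ∀ {k l : ℕ}, k ≤ l → t l ⊆ t k := by
    intro k l hkl δ hδ
    refine ⟨hδ.1, le_trans ?_ hδ.2⟩
    exact mul_le_mul_of_nonneg_right (by exact_mod_cast hkl) (hg_nonneg δ)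
  have ht_nonempty : ∀ k, (t k).Nonempty := by
    intro k
    have := hcon (k : ℝ)
    rw [Matrix.posDef_iff_dotProduct_mulVec] at this
    push_neg at this
    obtain ⟨x, hx0, hxle⟩ := this (hHerm _)
    have hx : (k : ℝ) * g x ≤ f x := by
      have : x ⬝ᵥ (-(S - (k : ℝ) • (B * Bᵀ))) *ᵥ x ≤ 0 := by
        simpa using hxle
      rw [hquad] at this
      linarith
    have hxn : ‖x‖ ≠ 0 := norm_ne_zero_iff.mpr hx0
    refine ⟨‖x‖⁻¹ • x, ?_, ?_⟩
    · simp [norm_smul, abs_of_nonneg (inv_nonneg.mpr (norm_nonneg x)),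
        inv_mul_cancel₀ hxn]
    · rw [hf_smul, hg_smul]
      have hc : (0 : ℝ) < (‖x‖⁻¹) ^ 2 := by positivity
      calc (k : ℝ) * ((‖x‖⁻¹) ^ 2 * g x) = (‖x‖⁻¹) ^ 2 * ((k : ℝ) * g x) := by ring
        _ ≤ (‖x‖⁻¹) ^ 2 * f x := by
            exact mul_le_mul_of_nonneg_left hx hc.le
  have hdir : Directed (· ⊇ ·) t := fun i j =>
    ⟨max i j, ht_anti (le_max_left i j), ht_anti (le_max_right i j)⟩
  obtain ⟨δ, hδ⟩ := IsCompact.nonempty_iInter_of_directed_nonempty_isCompact_isClosed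
    t hdir ht_nonempty ht_compact ht_closed
  simp only [Set.mem_iInter] at hδ
  have hδs : δ ∈ Metric.sphere (0 : Fin n → ℝ) 1 := (hδ 0).1
  have hδ0 : δ ≠ 0 := by
    intro hz
    have := Metric.mem_sphere.mp hδs
    rw [hz] at this
    simp at this
  have hgδ : g δ = 0 := by
    by_contra hg0
    have hgpos : 0 < g δ := lt_of_le_of_ne (hg_nonneg δ) (Ne.symm hg0)
    obtain ⟨k, hk⟩ := exists_nat_gt (f δ / g δ)
    have hle := (hδ k).2
    have : (k : ℝ) ≤ f δ / g δ := (le_div_iff₀ hgpos).mpr hle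
    linarith
  have hB0 : Bᵀ *ᵥ δ = 0 := dotProduct_self_eq_zero.mp hgδ
  have hneg := h δ hδ0 hB0
  have hpos : (0 : ℝ) ≤ f δ := by
    have := (hδ 0).2
    simpa using this
  exact absurd hneg (not_lt.mpr hpos)
end

section
/- If a linear system ż = Gz + Hv is stabilizable, i.e. there exist X = X' > 0 and L with XG + G'X + XHL + L'H'X < 0, and the nonlinear system is feedback linearizable via diffeomorphism z = θ(x,t) and feedback ū = α + βv (β invertible), then M(x) = Θ'XΘ with Θ = ∂θ/∂x is a control contraction metric: Ṁ + A'M + MA + MBK + K'B'M < 0 with K = ∂ū/∂x + βLΘ, where A, B are the differential dynamics matrices and G = ṪΘ⁻¹ + Θ(A + B∂ū/∂x)Θ⁻¹, H = ΘBβ (writing Ṫ = Θ̇). -/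
open Matrix

lemma conj_posdef_aux {n : ℕ} {N P : Matrix (Fin n) (Fin n) ℝ} (hN : N.PosDef)
    (hP : IsUnit P.det) : (Pᵀ * N * P).PosDef := by
  refine Matrix.PosDef.of_dotProduct_mulVec_pos ?_ ?_
  · have h := hN.1
    have e1 : Pᴴ = Pᵀ := by ext i j; simp [conjTranspose_apply]
    have e2 : Pᵀᴴ = P := by ext i j; simp [conjTranspose_apply]
    simp only [Matrix.IsHermitian, conjTranspose_mul, h.eq, Matrix.mul_assoc, e1, e2]
  · intro x hx
    have hx' : P *ᵥ x ≠ 0 := by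
      intro h
      apply hx
      have := congrArg (fun v => P⁻¹ *ᵥ v) h
      simpa [Matrix.mulVec_mulVec, Matrix.nonsing_inv_mul P hP] using this
    have := hN.dotProduct_mulVec_pos hx'
    simpa [Matrix.mul_assoc, ← Matrix.mulVec_mulVec, Matrix.dotProduct_mulVec,
      Matrix.vecMul_transpose] using this

/-- for a feedback-linearizable system, `M = Θ'XΘ` is a control contraction
metric. Pointwise in `(x,u,t)`: if `X = X' > 0` and `L` satisfy
`XG + G'X + XHL + L'H'X < 0` where `G = Θ̇Θ⁻¹ + Θ(A + B Ux)Θ⁻¹` and `H = ΘBβ`, then with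
`M = Θ'XΘ`, `Ṁ = Θ̇'XΘ + Θ'XΘ̇` and `K = Ux + βLΘ` (where `Ux = ∂ū/∂x`):
`Ṁ + A'M + MA + MBK + K'B'M < 0`. -/
theorem feedback_linearizable_ccm (n m : ℕ)
    (A : Matrix (Fin n) (Fin n) ℝ) (B : Matrix (Fin n) (Fin m) ℝ)
    (Θ Θd : Matrix (Fin n) (Fin n) ℝ) (hΘ : IsUnit Θ.det)
    (β : Matrix (Fin m) (Fin m) ℝ) (hβ : IsUnit β.det)
    (Ux : Matrix (Fin m) (Fin n) ℝ)
    (X : Matrix (Fin n) (Fin n) ℝ) (hX : X.PosDef)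
    (L : Matrix (Fin m) (Fin n) ℝ)
    (G : Matrix (Fin n) (Fin n) ℝ) (H : Matrix (Fin n) (Fin m) ℝ)
    (hG : G = Θd * Θ⁻¹ + Θ * (A + B * Ux) * Θ⁻¹)
    (hH : H = Θ * B * β)
    (hLyap : (-(X * G + Gᵀ * X + X * H * L + Lᵀ * Hᵀ * X)).PosDef) :
    (-((Θdᵀ * X * Θ + Θᵀ * X * Θd) + Aᵀ * (Θᵀ * X * Θ) + (Θᵀ * X * Θ) * A
        + (Θᵀ * X * Θ) * B * (Ux + β * L * Θ)
        + (Ux + β * L * Θ)ᵀ * Bᵀ * (Θᵀ * X * Θ))).PosDef := by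
  have key : Θᵀ * (-(X * G + Gᵀ * X + X * H * L + Lᵀ * Hᵀ * X)) * Θ
      = -((Θdᵀ * X * Θ + Θᵀ * X * Θd) + Aᵀ * (Θᵀ * X * Θ) + (Θᵀ * X * Θ) * A
        + (Θᵀ * X * Θ) * B * (Ux + β * L * Θ)
        + (Ux + β * L * Θ)ᵀ * Bᵀ * (Θᵀ * X * Θ)) := by
    subst hG hH
    simp only [Matrix.transpose_mul, Matrix.transpose_add, Matrix.mul_add, Matrix.add_mul,
      Matrix.mul_neg, Matrix.neg_mul, Matrix.mul_assoc,
      Matrix.nonsing_inv_mul_cancel_right _ _ hΘ]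
    rw [show (Θ⁻¹)ᵀ = (Θᵀ)⁻¹ from Matrix.transpose_nonsing_inv Θ]
    simp only [Matrix.mul_nonsing_inv_cancel_left _ _ ((Matrix.isUnit_det_transpose Θ) hΘ)]
    abel
  rw [← key]
  exact conj_posdef_aux hLyap hΘ
end

section
/- If the convexified condition (Φ+F)'Q⁻¹(Φ+F) + Q − (Φ−F) − (Φ−F)' − 2ρC'C ≤ −4λI holds with Q = Q' > 0, then Φ'Q⁻¹F + F'Q⁻¹Φ − ρC'C ≤ −2λI; in particular, for every δ with Cδ = 0, 2δ'Φ'Q⁻¹Fδ ≤ −2λ|δ|². -/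
open Matrix

private lemma psd_add {n : ℕ} {A B : Matrix (Fin n) (Fin n) ℝ}
    (hA : A.PosSemidef) (hB : B.PosSemidef) : (A + B).PosSemidef := by
  refine ⟨hA.1.add hB.1, fun x => ?_⟩
  have := add_nonneg (hA.2 x) (hB.2 x)
  exact (hA.add hB).2 x

private lemma psd_smul {n : ℕ} {A : Matrix (Fin n) (Fin n) ℝ} {c : ℝ}
    (hA : A.PosSemidef) (hc : 0 ≤ c) : (c • A).PosSemidef := by
  refine ⟨?_, fun x => ?_⟩
  · unfold Matrix.IsHermitian
    rw [conjTranspose_smul, hA.1.eq]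
    simp
  · have := mul_nonneg hc (hA.2 x)
    exact (hA.smul hc).2 x

/-- if `(Φ+F)'Q⁻¹(Φ+F) + Q − (Φ−F) − (Φ−F)' − 2ρC'C ≤ −4λI` with
`Q = Q' > 0`, then `Φ'Q⁻¹F + F'Q⁻¹Φ − ρC'C ≤ −2λI`; in particular, for every `δ` with
`Cδ = 0`, `2δ'Φ'Q⁻¹Fδ ≤ −2λ|δ|²`. -/
theorem convexified_observer_condition (n p : ℕ) (ρ lam : ℝ) (hlam : 0 < lam)
    (Φ F Q : Matrix (Fin n) (Fin n) ℝ) (C : Matrix (Fin p) (Fin n) ℝ)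
    (hQ : Q.PosDef)
    (h : (-((Φ + F)ᵀ * Q⁻¹ * (Φ + F) + Q - (Φ - F) - (Φ - F)ᵀ - (2 * ρ) • (Cᵀ * C)
          + (4 * lam) • (1 : Matrix (Fin n) (Fin n) ℝ))).PosSemidef) :
    (-(Φᵀ * Q⁻¹ * F + Fᵀ * Q⁻¹ * Φ - ρ • (Cᵀ * C)
        + (2 * lam) • (1 : Matrix (Fin n) (Fin n) ℝ))).PosSemidef ∧
    ∀ δ : Fin n → ℝ, C *ᵥ δ = 0 →
      2 * (δ ⬝ᵥ (Φᵀ * Q⁻¹ * F) *ᵥ δ) ≤ -2 * lam * (δ ⬝ᵥ δ) := by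
  have hQinv : (Q⁻¹).PosSemidef := (hQ.inv).posSemidef
  set M : Matrix (Fin n) (Fin n) ℝ := Φ - F with hM
  clear_value M
  -- B = (Q - M)ᵀ Q⁻¹ (Q - M) is PSD
  have hB0 : ((Q - M)ᵀ * Q⁻¹ * (Q - M)).PosSemidef := by
    have := hQinv.conjTranspose_mul_mul_same (Q - M)
    simpa using this
  -- identity: (Q-M)ᵀ Q⁻¹ (Q-M) = MᵀQ⁻¹M + Q - M - Mᵀ
  have hQQ : Q * Q⁻¹ = 1 := Matrix.mul_nonsing_inv Q (isUnit_iff_ne_zero.mpr hQ.det_pos.ne')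
  have hQQ' : Q⁻¹ * Q = 1 := Matrix.nonsing_inv_mul Q (isUnit_iff_ne_zero.mpr hQ.det_pos.ne')
  have hQsym : Qᵀ = Q := hQ.isHermitian.eq
  have hBeq : (Q - M)ᵀ * Q⁻¹ * (Q - M) = Mᵀ * Q⁻¹ * M + Q - M - Mᵀ := by
    rw [transpose_sub, hQsym]
    rw [Matrix.sub_mul, Matrix.sub_mul, Matrix.mul_sub, Matrix.mul_sub]
    rw [show Q * Q⁻¹ * Q = Q by rw [hQQ, one_mul]]
    rw [show Q * Q⁻¹ * M = M by rw [hQQ, one_mul]]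
    rw [show Mᵀ * Q⁻¹ * Q = Mᵀ by rw [Matrix.mul_assoc, hQQ', Matrix.mul_one]]
    abel
  have hB : (Mᵀ * Q⁻¹ * M + Q - M - Mᵀ).PosSemidef := hBeq ▸ hB0
  -- the key algebraic identity
  set S : Matrix (Fin n) (Fin n) ℝ :=
    Φᵀ * Q⁻¹ * F + Fᵀ * Q⁻¹ * Φ - ρ • (Cᵀ * C) + (2 * lam) • 1 with hS
  have key : (-((Φ + F)ᵀ * Q⁻¹ * (Φ + F) + Q - M - Mᵀ - (2 * ρ) • (Cᵀ * C)
        + (4 * lam) • (1 : Matrix (Fin n) (Fin n) ℝ)))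
      + (Mᵀ * Q⁻¹ * M + Q - M - Mᵀ) = (-2 : ℝ) • S := by
    rw [hS, hM]
    rw [transpose_add, transpose_sub]
    simp only [Matrix.add_mul, Matrix.sub_mul, Matrix.mul_add, Matrix.mul_sub]
    module
  have hsum : ((-2 : ℝ) • S).PosSemidef := key ▸ psd_add h hB
  have hnegS : (-S).PosSemidef := by
    have := psd_smul hsum (by norm_num : (0:ℝ) ≤ 2⁻¹)
    have e : (2⁻¹ : ℝ) • ((-2 : ℝ) • S) = -S := by
      rw [smul_smul]; norm_num
    rwa [e] at this
  refine ⟨hnegS, fun δ hδ => ?_⟩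
  have h2 := hnegS.dotProduct_mulVec_nonneg δ
  simp only [star_trivial] at h2
  have hC : δ ⬝ᵥ (Cᵀ * C) *ᵥ δ = 0 := by
    rw [← Matrix.mulVec_mulVec, dotProduct_mulVec, Matrix.vecMul_transpose, hδ]
    simp
  -- δ ⬝ (Fᵀ Q⁻¹ Φ) δ = δ ⬝ (Φᵀ Q⁻¹ F) δ
  have hsymQinv : (Q⁻¹)ᵀ = Q⁻¹ := by
    rw [Matrix.transpose_nonsing_inv, hQsym]
  have htr : δ ⬝ᵥ (Fᵀ * Q⁻¹ * Φ) *ᵥ δ = δ ⬝ᵥ (Φᵀ * Q⁻¹ * F) *ᵥ δ := by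
    have : (Fᵀ * Q⁻¹ * Φ)ᵀ = Φᵀ * Q⁻¹ * F := by
      rw [transpose_mul, transpose_mul, transpose_transpose, hsymQinv, Matrix.mul_assoc]
    rw [dotProduct_mulVec, ← this, Matrix.mulVec_transpose, dotProduct_comm]
  have hexp : δ ⬝ᵥ (-S) *ᵥ δ
      = -(δ ⬝ᵥ (Φᵀ * Q⁻¹ * F) *ᵥ δ + δ ⬝ᵥ (Fᵀ * Q⁻¹ * Φ) *ᵥ δ
          - ρ * (δ ⬝ᵥ (Cᵀ * C) *ᵥ δ) + 2 * lam * (δ ⬝ᵥ δ)) := by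
    rw [hS]
    simp [neg_mulVec, add_mulVec, sub_mulVec, dotProduct_add, dotProduct_sub,
      dotProduct_neg, smul_mulVec, dotProduct_smul, smul_eq_mul]
  rw [hexp, htr, hC] at h2
  linarith
end
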